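/- Let X be a locally compact space with countable base, V ⊆ X open, and let H : V → Measure X be a kernel such that H(x)(X) ≤ 1 for all x ∈ V and such that for every bounded Borel function f on X the map x ↦ ∫ f dH(x) is continuous on V. Fix a dense sequence (x_m) in V and set σ := Σ_m 2^{-m} H(x_m). Then for every x ∈ V, the measure H(x) is absolutely continuous with respect to σ. -/

import Mathlib

open MeasureTheory Filter Topology ENNReal

theorem absolutely_continuous_of_strong_feller
    {X : Type*} [TopologicalSpace X] [LocallyCompactSpace X]
    [SecondCountableTopology X] [MeasurableSpace X] [BorelSpace X]
    (V : Set X) (hV : IsOpen V)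
    (H : X → Measure X)
    (hH_sub : ∀ x ∈ V, H x Set.univ ≤ 1)
    (hH_cont : ∀ f : X → ℝ, Measurable f → (∃ C, ∀ x, |f x| ≤ C) →
      ContinuousOn (fun x => ∫ y, f y ∂(H x)) V)
    (xm : ℕ → X) (hxm : ∀ m, xm m ∈ V) (hdense : V ⊆ closure (Set.range xm))
    (σ : Measure X) (hσ : σ = Measure.sum (fun m => ((1/2 : ℝ≥0∞) ^ (m + 1)) • H (xm m))) :
    ∀ x ∈ V, H x ≪ σ := by
  intro x hx
  apply Measure.AbsolutelyContinuous.mk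
  intro A hA hA0
  -- each H (xm m) A = 0
  have hm : ∀ m, H (xm m) A = 0 := by
    intro m
    have hsum : (∑' m, (((1/2 : ℝ≥0∞) ^ (m + 1)) • H (xm m)) A) = 0 := by
      rw [← Measure.sum_apply _ hA, ← hσ, hA0]
    have := (ENNReal.tsum_eq_zero.mp hsum) m
    rw [Measure.smul_apply, smul_eq_mul, mul_eq_zero] at this
    rcases this with h | h
    · exact absurd h (by simp)
    · exact h
  -- the function g
  set f : X → ℝ := A.indicator 1 with hf
  have hfm : Measurable f := (measurable_indicator_const_iff 1).mpr (by simpa using hA)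
  have hfb : ∃ C, ∀ y, |f y| ≤ C := ⟨1, fun y => by
    by_cases h : y ∈ A <;> simp [hf, Set.indicator_apply, h]⟩
  have hcont := hH_cont f hfm hfb
  set g : X → ℝ := fun z => ∫ y, f y ∂(H z) with hg
  have hgval : ∀ z, g z = (H z A).toReal := by
    intro z
    simp [hg, hf, integral_indicator_one hA]
    rfl
  have hg0 : ∀ m, g (xm m) = 0 := by
    intro m; rw [hgval, hm m]; simp
  -- g continuous at x
  have hca : ContinuousAt g x := hcont.continuousAt (hV.mem_nhds hx)
  have hne : (𝓝[Set.range xm] x).NeBot :=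
    mem_closure_iff_nhdsWithin_neBot.mp (hdense hx)
  have h1 : Tendsto g (𝓝[Set.range xm] x) (𝓝 (g x)) :=
    hca.continuousWithinAt.tendsto
  have h2 : Tendsto g (𝓝[Set.range xm] x) (𝓝 0) := by
    apply Tendsto.congr' _ tendsto_const_nhds
    filter_upwards [self_mem_nhdsWithin] with z hz
    obtain ⟨m, rfl⟩ := hz
    exact (hg0 m).symm
  have hgx : g x = 0 := tendsto_nhds_unique h1 h2
  rw [hgval] at hgx
  have hfin : H x A ≠ ⊤ := by
    intro h
    have := (hH_sub x hx)
    have hle : H x A ≤ H x Set.univ := measure_mono (Set.subset_univ _)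
    rw [h] at hle
    exact absurd (le_trans hle this) (by simp)
  exact (ENNReal.toReal_eq_zero_iff _).mp hgx |>.resolve_right hfin
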